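/- (Expected trace of the fourth power of a product of independent Wishart matrices, β = 1.) Let d be a positive integer and let G₁ and G₂ be independent d×d random matrices whose entries are independent standard Gaussian (mean 0, variance 1) random variables. Set W₁ = G₁ᵀ G₁ and W₂ = G₂ᵀ G₂. Then E[ Tr(W₁ W₂ W₁ W₂) ] = 3 d³ (d² + d + 1). -/

import Mathlib

open MeasureTheory ProbabilityTheory Matrix

open Real Finset

/-! ### Auxiliary: one-dimensional Gaussian moments -/

noncomputable def gmJ (n : ℕ) : ℝ := ∫ x : ℝ, x ^ n * rexp (-(1/2) * x ^ 2)

lemma gm_intJ (n : ℕ) : Integrable (fun x : ℝ => x ^ n * rexp (-(1/2) * x ^ 2)) := by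
  have h := integrable_rpow_mul_exp_neg_mul_sq (b := 1/2) (by norm_num) (s := (n : ℝ))
    (by have := Nat.cast_nonneg (α := ℝ) n; linarith)
  simpa [Real.rpow_natCast] using h

lemma gmJ_zero : gmJ 0 = Real.sqrt (2 * π) := by
  have := integral_gaussian (1/2)
  simp only [gmJ, pow_zero, one_mul]
  rw [show (fun x : ℝ => rexp (-(1/2) * x ^ 2)) = fun x : ℝ => rexp (-(1/2 : ℝ) * x ^ 2) from rfl]
  rw [this, show π / (1/2) = 2 * π by ring]

lemma gmJ_odd (n : ℕ) : gmJ (2 * n + 1) = 0 := by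
  have h : ∫ x : ℝ, (-x) ^ (2*n+1) * rexp (-(1/2) * (-x) ^ 2) = gmJ (2*n+1) :=
    integral_neg_eq_self (fun x => x ^ (2*n+1) * rexp (-(1/2) * x ^ 2)) volume
  have h2 : ∀ x : ℝ, (-x) ^ (2*n+1) * rexp (-(1/2) * (-x) ^ 2)
      = -(x ^ (2*n+1) * rexp (-(1/2) * x ^ 2)) := by
    intro x; rw [Odd.neg_pow ⟨n, by ring⟩, neg_sq]; ring
  simp only [h2, integral_neg] at h
  have : -gmJ (2*n+1) = gmJ (2*n+1) := h
  linarith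

lemma gmJ_rec (n : ℕ) : gmJ (n + 2) = (n + 1) * gmJ n := by
  have hu : ∀ x : ℝ, HasDerivAt (fun x : ℝ => x ^ (n+1)) (((n:ℝ)+1) * x ^ n) x := by
    intro x
    simpa using hasDerivAt_pow (n+1) x
  have hv : ∀ x : ℝ, HasDerivAt (fun x : ℝ => rexp (-(1/2) * x ^ 2))
      (-x * rexp (-(1/2) * x ^ 2)) x := by
    intro x
    have h1 : HasDerivAt (fun x : ℝ => -(1/2) * x ^ 2) (-x) x := by
      simpa using ((hasDerivAt_pow 2 x).const_mul (-(1/2) : ℝ))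
    simpa [mul_comm] using h1.exp
  have key := integral_mul_deriv_eq_deriv_mul_of_integrable (fun x _ => hu x) (fun x _ => hv x)
    (by
      have : ((fun x : ℝ => x ^ (n+1)) * fun x => -x * rexp (-(1/2) * x ^ 2))
          = fun x : ℝ => -(x ^ (n+2) * rexp (-(1/2) * x ^ 2)) := by
        funext x; simp [Pi.mul_apply]; ring
      rw [this]; exact (gm_intJ (n+2)).neg)
    (by
      have : ((fun x : ℝ => ((n:ℝ)+1) * x ^ n) * fun x => rexp (-(1/2) * x ^ 2))
          = fun x : ℝ => ((n:ℝ)+1) * (x ^ n * rexp (-(1/2) * x ^ 2)) := by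
        funext x; simp [Pi.mul_apply]; ring
      rw [this]; exact (gm_intJ n).const_mul _)
    (by
      have : ((fun x : ℝ => x ^ (n+1)) * fun x => rexp (-(1/2) * x ^ 2))
          = fun x : ℝ => x ^ (n+1) * rexp (-(1/2) * x ^ 2) := rfl
      rw [this]; exact gm_intJ (n+1))
  have lhs_eq : ∫ x : ℝ, x ^ (n+1) * (-x * rexp (-(1/2) * x ^ 2)) = -gmJ (n+2) := by
    rw [show (fun x : ℝ => x ^ (n+1) * (-x * rexp (-(1/2) * x ^ 2)))
        = fun x : ℝ => -(x ^ (n+2) * rexp (-(1/2) * x ^ 2)) from by funext x; ring]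
    · exact integral_neg _
  have rhs_eq : ∫ x : ℝ, ((n:ℝ)+1) * x ^ n * rexp (-(1/2) * x ^ 2) = ((n:ℝ)+1) * gmJ n := by
    rw [show (fun x : ℝ => ((n:ℝ)+1) * x ^ n * rexp (-(1/2) * x ^ 2))
        = fun x : ℝ => ((n:ℝ)+1) * (x ^ n * rexp (-(1/2) * x ^ 2)) from by funext x; ring]
    · exact integral_const_mul _ _
  rw [lhs_eq, rhs_eq] at key
  linarith

noncomputable def gmM (n : ℕ) : ℝ := ∫ x : ℝ, x ^ n ∂(gaussianReal 0 1)

lemma gm_gauss_int_eq (g : ℝ → ℝ) :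
    ∫ x, g x ∂(gaussianReal 0 1) = ∫ x, gaussianPDFReal 0 1 x * g x := by
  rw [gaussianReal_of_var_ne_zero 0 one_ne_zero]
  have hmeas : Measurable fun x => (gaussianPDFReal 0 1 x).toNNReal :=
    (measurable_gaussianPDFReal 0 1).real_toNNReal
  rw [show gaussianPDF 0 1 = fun x => ((gaussianPDFReal 0 1 x).toNNReal : ENNReal) from rfl]
  rw [integral_withDensity_eq_integral_smul hmeas]
  congr 1
  funext x
  rw [NNReal.smul_def, Real.coe_toNNReal _ (gaussianPDFReal_nonneg 0 1 x), smul_eq_mul]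

lemma gmM_eq (n : ℕ) : gmM n = (Real.sqrt (2 * π))⁻¹ * gmJ n := by
  rw [gmM, gm_gauss_int_eq]
  have : ∀ x : ℝ, gaussianPDFReal 0 1 x * x ^ n
      = (Real.sqrt (2 * π))⁻¹ * (x ^ n * rexp (-(1/2) * x ^ 2)) := by
    intro x
    simp only [gaussianPDFReal]
    norm_num
    ring_nf
  simp only [this]
  rw [integral_const_mul]
  rfl

lemma gm_sqrt_ne : Real.sqrt (2 * π) ≠ 0 := by
  have : (0:ℝ) < 2 * π := by positivity
  positivity

lemma gmM0 : gmM 0 = 1 := by rw [gmM_eq, gmJ_zero, inv_mul_cancel₀ gm_sqrt_ne]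
lemma gmM1 : gmM 1 = 0 := by rw [gmM_eq, show gmJ 1 = gmJ (2*0+1) from rfl, gmJ_odd]; ring
lemma gmM2 : gmM 2 = 1 := by
  rw [gmM_eq, show (2:ℕ) = 0+2 from rfl, gmJ_rec, gmJ_zero]
  rw [Nat.cast_zero, zero_add, one_mul, inv_mul_cancel₀ gm_sqrt_ne]
lemma gmM3 : gmM 3 = 0 := by rw [gmM_eq, show (3:ℕ) = 2*1+1 from rfl, gmJ_odd]; ring
lemma gmM4 : gmM 4 = 3 := by
  have h2 : gmJ 2 = Real.sqrt (2 * π) := by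
    rw [show (2:ℕ) = 0+2 from rfl, gmJ_rec, gmJ_zero]; norm_num
  rw [gmM_eq, show (4:ℕ) = 2+2 from rfl, gmJ_rec, h2]
  push_cast
  field_simp
  ring

lemma gm_int_pow (n : ℕ) :
    Integrable (fun x : ℝ => x ^ n) (gaussianReal 0 1) := by
  rw [gaussianReal_of_var_ne_zero 0 one_ne_zero]
  rw [show gaussianPDF 0 1 = fun x => ENNReal.ofReal (gaussianPDFReal 0 1 x) from rfl]
  rw [integrable_withDensity_iff (measurable_gaussianPDFReal 0 1).ennreal_ofReal
    (Filter.Eventually.of_forall fun x => ENNReal.ofReal_lt_top)]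
  have : ∀ x : ℝ, x ^ n * (ENNReal.ofReal (gaussianPDFReal 0 1 x)).toReal
      = (Real.sqrt (2 * π))⁻¹ * (x ^ n * rexp (-(1/2) * x ^ 2)) := by
    intro x
    rw [ENNReal.toReal_ofReal (gaussianPDFReal_nonneg 0 1 x)]
    simp only [gaussianPDFReal]
    norm_num
    ring_nf
  simp only [this]
  exact (gm_intJ n).const_mul _

/-! ### Auxiliary: Fubini over finite products for general measures -/

theorem gm_integrable_pi {n : ℕ} {E : Fin n → Type*}
    [∀ i, MeasurableSpace (E i)] (μ : ∀ i, Measure (E i)) [∀ i, SigmaFinite (μ i)]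
    {f : (i : Fin n) → E i → ℝ} (hf : ∀ i, Integrable (f i) (μ i)) :
    Integrable (fun (x : (i : Fin n) → E i) ↦ ∏ i, f i (x i)) (Measure.pi μ) := by
  induction n with
  | zero =>
      rw [Measure.pi_of_empty μ]
      simp only [Finset.univ_eq_empty, Finset.prod_empty]
      exact integrable_const _
  | succ n n_ih =>
      have := ((measurePreserving_piFinSuccAbove μ 0).symm)
      rw [← this.integrable_comp_emb (MeasurableEquiv.measurableEmbedding _)]
      simp_rw [MeasurableEquiv.piFinSuccAbove_symm_apply, Fin.insertNthEquiv,
        Fin.prod_univ_succ, Fin.insertNth_zero]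
      simp only [Fin.zero_succAbove, cast_eq, Function.comp_def, Fin.cons_zero, Fin.cons_succ,
        Equiv.coe_fn_mk]
      have : Integrable (fun (x : (j : Fin n) → E (Fin.succ j)) ↦ ∏ j, f (Fin.succ j) (x j))
          (Measure.pi fun j => μ (Fin.succ j)) :=
        n_ih _ (fun i ↦ hf _)
      exact Integrable.mul_prod (hf 0) this

theorem gm_integral_pi {n : ℕ} {E : Fin n → Type*}
    [∀ i, MeasurableSpace (E i)] (μ : ∀ i, Measure (E i)) [∀ i, SigmaFinite (μ i)]
    (f : (i : Fin n) → E i → ℝ) :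
    ∫ x : (i : Fin n) → E i, ∏ i, f i (x i) ∂Measure.pi μ = ∏ i, ∫ x, f i x ∂μ i := by
  induction n with
  | zero =>
      simp only [Finset.univ_eq_empty, Finset.prod_empty, integral_const,
        Measure.pi_of_empty, smul_eq_mul, mul_one]
      rw [Measure.pi_of_empty]
      simp
  | succ n n_ih =>
      calc
        _ = ∫ x : E 0 × ((i : Fin n) → E (Fin.succ i)),
            f 0 x.1 * ∏ i : Fin n, f (Fin.succ i) (x.2 i)
            ∂((μ 0).prod (Measure.pi fun i => μ (Fin.succ i))) := by
          rw [← ((measurePreserving_piFinSuccAbove μ 0).symm).integral_comp']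
          simp_rw [MeasurableEquiv.piFinSuccAbove_symm_apply, Fin.insertNthEquiv,
            Fin.prod_univ_succ, Fin.insertNth_zero, Equiv.coe_fn_mk, Fin.cons_succ]
          rfl
        _ = (∫ x, f 0 x ∂μ 0) * ∏ i : Fin n, ∫ (x : E (Fin.succ i)), f (Fin.succ i) x
            ∂μ (Fin.succ i) := by
          rw [← n_ih _, ← integral_prod_mul]
        _ = ∏ i, ∫ x, f i x ∂μ i := by rw [Fin.prod_univ_succ]

/-! ### Auxiliary: Wick combinatorics -/

noncomputable def gmD {ι : Type*} [DecidableEq ι] (a b : ι) : ℝ := if a = b then 1 else 0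

noncomputable def gmMul4 {ι : Type*} [DecidableEq ι] (p q r s : ι) (c : ι) : ℕ :=
  (if c = p then 1 else 0) + (if c = q then 1 else 0) +
    (if c = r then 1 else 0) + (if c = s then 1 else 0)

lemma gm_wick4 {ι : Type*} [Fintype ι] [DecidableEq ι] (p q r s : ι) :
    ∏ c, gmM (gmMul4 p q r s c)
      = gmD p q * gmD r s + gmD p r * gmD q s + gmD p s * gmD q r := by
  by_cases hpq : p = q
  · subst hpq
    by_cases hrs : r = s
    · subst hrs
      by_cases hpr : p = r
      · subst hpr
        have : ∀ c, gmM (gmMul4 p p p p c) = if c = p then (3:ℝ) else 1 := by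
          intro c
          by_cases h : c = p <;> simp [gmMul4, h, gmM4, gmM0]
        rw [Finset.prod_congr rfl fun c _ => this c, Finset.prod_ite_eq']
        simp [gmD]
        norm_num
      · have : ∀ c, gmM (gmMul4 p p r r c) = 1 := by
          intro c
          by_cases h1 : c = p <;> by_cases h2 : c = r
          · exact absurd (h1 ▸ h2) hpr
          all_goals simp [gmMul4, h1, h2, gmM2, gmM0, if_neg hpr,
            if_neg (fun h => hpr h.symm : ¬r = p)]
        rw [Finset.prod_congr rfl fun c _ => this c, Finset.prod_const_one]
        simp [gmD, hpr]
    · rw [Finset.prod_eq_zero (Finset.mem_univ r)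
        (by
          by_cases h1 : r = p
          · simp [gmMul4, h1, hrs, gmM3, if_neg (h1 ▸ hrs : ¬p = s)]
          · simp [gmMul4, h1, hrs, gmM1, gmM3])
      ]
      simp only [gmD]
      split_ifs <;> simp_all
  · by_cases hrs : r = s
    · subst hrs
      rw [Finset.prod_eq_zero (Finset.mem_univ p)
        (by
          by_cases h1 : p = r
          · simp [gmMul4, hpq, h1, gmM3, if_neg (fun h => hpq (h1.trans h) : ¬r = q), gmM3]
          · simp [gmMul4, hpq, h1, gmM1, gmM3])
      ]
      simp only [gmD]
      split_ifs <;> simp_all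
    · by_cases hpr : p = r
      · subst hpr
        by_cases hqs : q = s
        · subst hqs
          have : ∀ c, gmM (gmMul4 p q p q c) = 1 := by
            intro c
            by_cases h1 : c = p <;> by_cases h2 : c = q
            · exact absurd (h1 ▸ h2) hpq
            all_goals simp [gmMul4, h1, h2, gmM2, gmM0, if_neg hpq,
              if_neg (fun h => hpq h.symm : ¬q = p)]
          rw [Finset.prod_congr rfl fun c _ => this c, Finset.prod_const_one]
          simp [gmD, hpq, hrs, Ne.symm hpq]
        · rw [Finset.prod_eq_zero (Finset.mem_univ q)
            (by simp [gmMul4, Ne.symm hpq, hqs, gmM1, gmM3])]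
          simp [gmD, hpq, hqs, hrs]
      · by_cases hps : p = s
        · subst hps
          by_cases hqr : q = r
          · subst hqr
            have : ∀ c, gmM (gmMul4 p q q p c) = 1 := by
              intro c
              by_cases h1 : c = p <;> by_cases h2 : c = q
              · exact absurd (h1 ▸ h2) hpq
              all_goals simp [gmMul4, h1, h2, gmM2, gmM0, if_neg hpq,
                if_neg (fun h => hpq h.symm : ¬q = p)]
            rw [Finset.prod_congr rfl fun c _ => this c, Finset.prod_const_one]
            simp [gmD, hpq, hpr, hrs, if_neg (fun h => hpq h.symm : ¬q = p)]
          · rw [Finset.prod_eq_zero (Finset.mem_univ q)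
              (by simp [gmMul4, Ne.symm hpq, hqr, gmM1, gmM3])]
            simp [gmD, hpq, hpr, hqr]
        · rw [Finset.prod_eq_zero (Finset.mem_univ p)
            (by simp [gmMul4, hpq, hpr, hps, gmM1, gmM3])]
          simp [gmD, hpq, hpr, hps]

/-! ### Auxiliary: monomial representation -/

lemma gm_single_repr {d : ℕ} (x : Fin d → Fin d → ℝ) (p : Fin d × Fin d) :
    (∏ a, ∏ i, (x a i) ^ (if (a, i) = p then 1 else 0)) = x p.1 p.2 := by
  have h : ∀ a : Fin d, (∏ i, (x a i) ^ (if (a, i) = p then 1 else 0))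
      = if a = p.1 then x a p.2 else 1 := by
    intro a
    by_cases ha : a = p.1
    · rw [if_pos ha]
      have : ∀ i : Fin d, (x a i) ^ (if (a, i) = p then 1 else 0)
          = if i = p.2 then x a i else 1 := by
        intro i
        by_cases hi : i = p.2
        · rw [if_pos hi, if_pos (by rw [ha, hi]), pow_one]
        · rw [if_neg hi, if_neg (by simp [Prod.ext_iff, hi]), pow_zero]
      rw [Finset.prod_congr rfl fun i _ => this i, Finset.prod_ite_eq']
      simp
    · have : ∀ i : Fin d, (x a i) ^ (if (a, i) = p then 1 else 0) = 1 := by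
        intro i
        rw [if_neg (by simp [Prod.ext_iff, ha]), pow_zero]
      rw [Finset.prod_congr rfl fun i _ => this i, Finset.prod_const_one, if_neg ha]
  rw [Finset.prod_congr rfl fun a _ => h a, Finset.prod_ite_eq']
  simp

lemma gm_monomial_repr {d : ℕ} (x : Fin d → Fin d → ℝ) (p q r s : Fin d × Fin d) :
    x p.1 p.2 * x q.1 q.2 * x r.1 r.2 * x s.1 s.2
      = ∏ a, ∏ i, (x a i) ^ (gmMul4 p q r s (a, i)) := by
  simp only [gmMul4, pow_add, Finset.prod_mul_distrib]
  rw [gm_single_repr, gm_single_repr, gm_single_repr, gm_single_repr]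

lemma gmD_prod {d : ℕ} (a b i k : Fin d) :
    gmD ((a, i) : Fin d × Fin d) (b, k) = gmD a b * gmD i k := by
  by_cases h1 : a = b <;> by_cases h2 : i = k <;>
    simp [gmD, Prod.ext_iff, h1, h2]

/-! ### The Gaussian matrix measure -/

noncomputable def gmMeas (d : ℕ) : Measure (Fin d → Fin d → ℝ) :=
  Measure.pi fun _ : Fin d => Measure.pi fun _ : Fin d => gaussianReal 0 1

instance (d : ℕ) : SigmaFinite (gmMeas d) := by
  unfold gmMeas; infer_instance

lemma gm_integral_monomial {d : ℕ} (v : Fin d → Fin d → ℕ) :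
    ∫ g, ∏ a, ∏ i, (g a i) ^ (v a i) ∂(gmMeas d) = ∏ a, ∏ i, gmM (v a i) := by
  unfold gmMeas
  rw [gm_integral_pi _ (fun a (row : Fin d → ℝ) => ∏ i, (row i) ^ (v a i))]
  exact Finset.prod_congr rfl fun a _ =>
    gm_integral_pi _ (fun i (t : ℝ) => t ^ (v a i))

lemma gm_integrable_monomial {d : ℕ} (v : Fin d → Fin d → ℕ) :
    Integrable (fun g => ∏ a, ∏ i, (g a i) ^ (v a i)) (gmMeas d) := by
  unfold gmMeas
  exact gm_integrable_pi _ (f := fun a (row : Fin d → ℝ) => ∏ i, (row i) ^ (v a i))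
    (fun a => gm_integrable_pi _ (f := fun i (t : ℝ) => t ^ (v a i))
      (fun i => gm_int_pow (v a i)))

lemma gm_integrable4 {d : ℕ} (a i b j c k e l : Fin d) :
    Integrable (fun g : Fin d → Fin d → ℝ => g a i * g b j * g c k * g e l) (gmMeas d) := by
  have h : (fun g : Fin d → Fin d → ℝ => g a i * g b j * g c k * g e l)
      = fun g => ∏ x, ∏ y, (g x y) ^ (gmMul4 (a,i) (b,j) (c,k) (e,l) (x, y)) := by
    funext g; exact gm_monomial_repr g (a,i) (b,j) (c,k) (e,l)
  rw [h]
  exact gm_integrable_monomial _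

lemma gm_E4 {d : ℕ} (a i b j c k e l : Fin d) :
    ∫ g, g a i * g b j * g c k * g e l ∂(gmMeas d)
      = gmD ((a,i) : Fin d × Fin d) (b,j) * gmD ((c,k) : Fin d × Fin d) (e,l)
        + gmD ((a,i) : Fin d × Fin d) (c,k) * gmD ((b,j) : Fin d × Fin d) (e,l)
        + gmD ((a,i) : Fin d × Fin d) (e,l) * gmD ((b,j) : Fin d × Fin d) (c,k) := by
  have h : (fun g : Fin d → Fin d → ℝ => g a i * g b j * g c k * g e l)
      = fun g => ∏ x, ∏ y, (g x y) ^ (gmMul4 (a,i) (b,j) (c,k) (e,l) (x, y)) := by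
    funext g; exact gm_monomial_repr g (a,i) (b,j) (c,k) (e,l)
  rw [h, gm_integral_monomial]
  rw [← gm_wick4 ((a,i) : Fin d × Fin d) (b,j) (c,k) (e,l)]
  rw [Fintype.prod_prod_type]

lemma gmD_self {d : ℕ} (a : Fin d) : gmD a a = 1 := by simp [gmD]

lemma gm_sum_D {d : ℕ} (a : Fin d) : ∑ b, gmD a b = 1 := by
  simp [gmD, Finset.sum_ite_eq]

/-! ### Wishart second moments -/

lemma gm_Amom {d : ℕ} (i j k l : Fin d) :
    ∫ g, (∑ a, g a i * g a j) * (∑ b, g b k * g b l) ∂(gmMeas d)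
      = (d:ℝ)^2 * (gmD i j * gmD k l) + d * (gmD i k * gmD j l)
        + d * (gmD i l * gmD j k) := by
  have h : ∀ g : Fin d → Fin d → ℝ, (∑ a, g a i * g a j) * (∑ b, g b k * g b l)
      = ∑ a, ∑ b, g a i * g a j * g b k * g b l := by
    intro g
    rw [Finset.sum_mul_sum]
    exact Finset.sum_congr rfl fun a _ => Finset.sum_congr rfl fun b _ => by ring
  simp_rw [h]
  rw [integral_finset_sum _ (fun a _ =>
    integrable_finset_sum _ (fun b _ => gm_integrable4 a i a j b k b l))]
  have h2 : ∀ a : Fin d, ∫ g, ∑ b, g a i * g a j * g b k * g b l ∂(gmMeas d)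
      = ∑ b, (gmD i j * gmD k l + (gmD a b * gmD i k) * (gmD a b * gmD j l)
          + (gmD a b * gmD i l) * (gmD a b * gmD j k)) := by
    intro a
    rw [integral_finset_sum _ (fun b _ => gm_integrable4 a i a j b k b l)]
    refine Finset.sum_congr rfl fun b _ => ?_
    rw [gm_E4, gmD_prod, gmD_prod, gmD_prod, gmD_prod, gmD_prod, gmD_prod,
      gmD_self, gmD_self]
    ring
  simp_rw [h2]
  have hDD : ∀ a b : Fin d, gmD a b * gmD a b = gmD a b := by
    intro a b; by_cases h : a = b <;> simp [gmD, h]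
  have h3 : ∀ a b : Fin d,
      gmD i j * gmD k l + (gmD a b * gmD i k) * (gmD a b * gmD j l)
        + (gmD a b * gmD i l) * (gmD a b * gmD j k)
      = gmD i j * gmD k l + gmD a b * (gmD i k * gmD j l)
        + gmD a b * (gmD i l * gmD j k) := by
    intro a b
    by_cases hab : a = b
    · subst hab; simp only [gmD_self]; ring
    · have h0 : gmD a b = 0 := if_neg hab
      rw [h0]; ring
  simp_rw [h3, Finset.sum_add_distrib, ← Finset.mul_sum]
  have e1 : (∑ _x : Fin d, ∑ _y : Fin d, gmD k l) = (d:ℝ)^2 * gmD k l := by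
    simp [Finset.sum_const, Finset.card_univ, nsmul_eq_mul]
    ring
  have e2 : ∀ C : ℝ, ∑ x : Fin d, ∑ y : Fin d, gmD x y * C = d * C := by
    intro C
    have hx : ∀ x : Fin d, ∑ y, gmD x y * C = C := by
      intro x; rw [← Finset.sum_mul, gm_sum_D, one_mul]
    simp_rw [hx]
    simp [Finset.sum_const, Finset.card_univ, nsmul_eq_mul]
  rw [e1, e2, e2]
  ring

/-! ### Trace expansion and delta counting -/

lemma gm_trace_eq {d : ℕ} (P Q R S : Matrix (Fin d) (Fin d) ℝ) :
    (P * Q * R * S).trace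
      = ∑ i, ∑ l, ∑ k, ∑ j, (P i j * R k l) * (Q j k * S l i) := by
  simp only [Matrix.trace, Matrix.diag, Matrix.mul_apply, Finset.sum_mul]
  exact Finset.sum_congr rfl fun i _ => Finset.sum_congr rfl fun l _ =>
    Finset.sum_congr rfl fun k _ => Finset.sum_congr rfl fun j _ => by ring

lemma gm_W_apply {d : ℕ} (g : Fin d → Fin d → ℝ) (i j : Fin d) :
    ((Matrix.of g)ᵀ * Matrix.of g) i j = ∑ a, g a i * g a j := by
  simp [Matrix.mul_apply, Matrix.transpose_apply]

set_option maxHeartbeats 1000000 in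
lemma gm_count (d : ℕ) :
    (∑ i : Fin d, ∑ l : Fin d, ∑ k : Fin d, ∑ j : Fin d,
      ((d:ℝ)^2 * (gmD i j * gmD k l) + d * (gmD i k * gmD j l) + d * (gmD i l * gmD j k)) *
      ((d:ℝ)^2 * (gmD j k * gmD l i) + d * (gmD j l * gmD k i) + d * (gmD j i * gmD k l)))
    = 3*(d:ℝ)^5 + 3*(d:ℝ)^4 + 3*(d:ℝ)^3 := by
  simp only [gmD, mul_ite, ite_mul, mul_one, one_mul, mul_zero, zero_mul, add_mul, mul_add,
    Finset.sum_add_distrib, Finset.sum_ite_irrel, Finset.sum_ite_eq, Finset.sum_ite_eq',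
    Finset.mem_univ, if_true, Finset.sum_const, Finset.card_univ, Fintype.card_fin,
    nsmul_eq_mul, smul_eq_mul, Finset.sum_const_zero, add_zero, zero_add, eq_self_iff_true]
  ring_nf

lemma gm_int_AA {d : ℕ} (i j k l : Fin d) :
    Integrable (fun g : Fin d → Fin d → ℝ =>
      (∑ a, g a i * g a j) * (∑ b, g b k * g b l)) (gmMeas d) := by
  have h : (fun g : Fin d → Fin d → ℝ => (∑ a, g a i * g a j) * (∑ b, g b k * g b l))
      = fun g => ∑ a, ∑ b, g a i * g a j * g b k * g b l := by
    funext g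
    rw [Finset.sum_mul_sum]
    exact Finset.sum_congr rfl fun a _ => Finset.sum_congr rfl fun b _ => by ring
  rw [h]
  exact integrable_finset_sum _ (fun a _ =>
    integrable_finset_sum _ (fun b _ => gm_integrable4 a i a j b k b l))

lemma gm_integral_sum4 {α : Type*} [MeasurableSpace α] (μ : Measure α) {d : ℕ}
    (F : Fin d → Fin d → Fin d → Fin d → α → ℝ)
    (hF : ∀ i l k j, Integrable (F i l k j) μ) :
    ∫ g, ∑ i, ∑ l, ∑ k, ∑ j, F i l k j g ∂μ
      = ∑ i, ∑ l, ∑ k, ∑ j, ∫ g, F i l k j g ∂μ := by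
  rw [integral_finset_sum _ (fun i _ => integrable_finset_sum _ fun l _ =>
    integrable_finset_sum _ fun k _ => integrable_finset_sum _ fun j _ => hF i l k j)]
  refine Finset.sum_congr rfl fun i _ => ?_
  rw [integral_finset_sum _ (fun l _ =>
    integrable_finset_sum _ fun k _ => integrable_finset_sum _ fun j _ => hF i l k j)]
  refine Finset.sum_congr rfl fun l _ => ?_
  rw [integral_finset_sum _ (fun k _ => integrable_finset_sum _ fun j _ => hF i l k j)]
  refine Finset.sum_congr rfl fun k _ => ?_
  rw [integral_finset_sum _ (fun j _ => hF i l k j)]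


/-- **expected trace of the fourth power of a product of
independent Wishart matrices, β = 1.** Let `G₁ = g.1` and `G₂ = g.2` be
independent `d × d` matrices of i.i.d. standard Gaussians (joint law the
product of `2d²` standard Gaussians), and set `W₁ = G₁ᵀ G₁`, `W₂ = G₂ᵀ G₂`.
Then `E[Tr(W₁ W₂ W₁ W₂)] = 3 d³ (d² + d + 1)`. -/
theorem wishart_product_fourth_trace (d : ℕ) (hd : 0 < d) :
    ∫ g : (Fin d → Fin d → ℝ) × (Fin d → Fin d → ℝ),
        ((Matrix.of g.1)ᵀ * Matrix.of g.1 * ((Matrix.of g.2)ᵀ * Matrix.of g.2) *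
          ((Matrix.of g.1)ᵀ * Matrix.of g.1) *
          ((Matrix.of g.2)ᵀ * Matrix.of g.2)).trace
        ∂((Measure.pi fun _ : Fin d =>
              Measure.pi fun _ : Fin d => gaussianReal 0 1).prod
          (Measure.pi fun _ : Fin d =>
              Measure.pi fun _ : Fin d => gaussianReal 0 1)) =
      3 * (d : ℝ) ^ 3 * ((d : ℝ) ^ 2 + (d : ℝ) + 1) := by
  have hint : ∀ g : (Fin d → Fin d → ℝ) × (Fin d → Fin d → ℝ),
      ((Matrix.of g.1)ᵀ * Matrix.of g.1 * ((Matrix.of g.2)ᵀ * Matrix.of g.2) *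
        ((Matrix.of g.1)ᵀ * Matrix.of g.1) * ((Matrix.of g.2)ᵀ * Matrix.of g.2)).trace
      = ∑ i, ∑ l, ∑ k, ∑ j,
          ((∑ a, g.1 a i * g.1 a j) * (∑ a, g.1 a k * g.1 a l)) *
          ((∑ a, g.2 a j * g.2 a k) * (∑ a, g.2 a l * g.2 a i)) := by
    intro g
    rw [gm_trace_eq]
    simp only [gm_W_apply]
  simp_rw [hint]
  have hswap := gm_integral_sum4 ((gmMeas d).prod (gmMeas d))
    (fun i l k j (g : (Fin d → Fin d → ℝ) × (Fin d → Fin d → ℝ)) =>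
      ((∑ a, g.1 a i * g.1 a j) * (∑ a, g.1 a k * g.1 a l)) *
      ((∑ a, g.2 a j * g.2 a k) * (∑ a, g.2 a l * g.2 a i)))
    (fun i l k j => (gm_int_AA i j k l).mul_prod (gm_int_AA j k l i))
  rw [show ((Measure.pi fun _ : Fin d => Measure.pi fun _ : Fin d => gaussianReal 0 1).prod
      (Measure.pi fun _ : Fin d => Measure.pi fun _ : Fin d => gaussianReal 0 1))
      = (gmMeas d).prod (gmMeas d) from rfl]
  rw [hswap]
  have hterm : ∀ i l k j : Fin d,
      ∫ g : (Fin d → Fin d → ℝ) × (Fin d → Fin d → ℝ),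
        ((∑ a, g.1 a i * g.1 a j) * (∑ a, g.1 a k * g.1 a l)) *
        ((∑ a, g.2 a j * g.2 a k) * (∑ a, g.2 a l * g.2 a i))
        ∂((gmMeas d).prod (gmMeas d))
      = ((d:ℝ)^2 * (gmD i j * gmD k l) + d * (gmD i k * gmD j l) + d * (gmD i l * gmD j k)) *
        ((d:ℝ)^2 * (gmD j k * gmD l i) + d * (gmD j l * gmD k i) + d * (gmD j i * gmD k l)) := by
    intro i l k j
    rw [integral_prod_mul (μ := gmMeas d) (ν := gmMeas d)
      (f := fun x : Fin d → Fin d → ℝ => (∑ a, x a i * x a j) * (∑ a, x a k * x a l))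
      (g := fun x : Fin d → Fin d → ℝ => (∑ a, x a j * x a k) * (∑ a, x a l * x a i))]
    rw [gm_Amom, gm_Amom]
  simp_rw [hterm]
  rw [gm_count d]
  ring
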